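/- Let D = (U_D, V_D, E_D) be a k-defective biclique of a bipartite graph G with |U_D| ≥ θ and |V_D| ≥ θ for some natural number θ ≥ 1. Let (a_t) be a sequence of natural numbers with a_0 ≥ |U_D| and a_t = max(θ, ⌊a_{t−1}/2⌋) for t ≥ 1, and for each t ≥ 1 let b_t = max(θ, ⌊e_t / a_{t−1}⌋) where e_t is any natural number with e_t ≤ |E_D|. Then there exists t ≥ 1 such that a_t ≤ |U_D| and b_t ≤ |V_D|. -/

import Mathlib

/-- correctness of the progressive bounding reduction. For a `k`-defective
biclique `D` with both sides of size at least `θ ≥ 1`, sequences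
`a (t+1) = max θ (a t / 2)` with `a 0 ≥ |U_D|`, and `b (t+1) = max θ (e (t+1) / a t)` with
`e (t+1) ≤ |E_D|`, there is a round `t ≥ 1` with `a t ≤ |U_D|` and `b t ≤ |V_D|`. -/
theorem progressive_bounding {α β : Type*} [DecidableEq α] [DecidableEq β]
    (E : Finset (α × β)) (k θ : ℕ) (hθ : 1 ≤ θ)
    (UD : Finset α) (VD : Finset β)
    (hdef : ((UD ×ˢ VD) \ E).card ≤ k)
    (hU : θ ≤ UD.card) (hV : θ ≤ VD.card)
    (a b e : ℕ → ℕ)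
    (ha0 : UD.card ≤ a 0)
    (ha : ∀ t, a (t + 1) = max θ (a t / 2))
    (he : ∀ t, e (t + 1) ≤ ((UD ×ˢ VD) ∩ E).card)
    (hb : ∀ t, b (t + 1) = max θ (e (t + 1) / a t)) :
    ∃ t, 1 ≤ t ∧ a t ≤ UD.card ∧ b t ≤ VD.card := by
  -- decay of `a`
  have hdecay : ∀ t, a t ≤ max θ (a 0 / 2 ^ t) := by
    intro t
    induction t with
    | zero => simp
    | succ n ih =>
      rw [ha n]
      refine max_le (le_max_left _ _) ?_
      rcases le_total θ (a 0 / 2 ^ n) with h | h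
      · have : a n / 2 ≤ a 0 / 2 ^ n / 2 :=
          Nat.div_le_div_right (ih.trans_eq (max_eq_right h))
        refine le_trans this (le_trans (le_of_eq ?_) (le_max_right _ _))
        rw [Nat.div_div_eq_div_mul, pow_succ]
      · have : a n / 2 ≤ θ / 2 :=
          Nat.div_le_div_right (ih.trans_eq (max_eq_left h))
        exact le_trans this (le_trans (Nat.div_le_self _ _) (le_max_left _ _))
  have hT : a (a 0 + 1) ≤ UD.card := by
    have h0 : a 0 / 2 ^ (a 0 + 1) = 0 :=
      Nat.div_eq_of_lt (lt_of_lt_of_le Nat.lt_two_pow_self (Nat.pow_le_pow_right (by norm_num) (Nat.le_succ _)))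
    have := hdecay (a 0 + 1)
    rw [h0] at this
    simpa using this.trans (max_le hU (Nat.zero_le _))
  -- pick the minimal round
  have hex : ∃ t, 1 ≤ t ∧ a t ≤ UD.card := ⟨a 0 + 1, Nat.le_add_left _ _, hT⟩
  classical
  obtain ⟨ht1, hta⟩ := Nat.find_spec hex
  obtain ⟨s, hts⟩ : ∃ s, Nat.find hex = s + 1 :=
    ⟨Nat.find hex - 1, (Nat.succ_pred_eq_of_pos ht1).symm⟩
  rw [hts] at ht1 hta
  -- a s ≥ UD.card
  have has : UD.card ≤ a s := by
    rcases Nat.eq_zero_or_pos s with rfl | hs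
    · exact ha0
    · have := Nat.find_min hex (m := s) (by omega)
      push_neg at this
      exact le_of_lt (this hs)
  have hUpos : 0 < UD.card := lt_of_lt_of_le hθ hU
  have hEle : ((UD ×ˢ VD) ∩ E).card ≤ UD.card * VD.card := by
    calc ((UD ×ˢ VD) ∩ E).card ≤ (UD ×ˢ VD).card :=
          Finset.card_le_card (Finset.inter_subset_left)
      _ = UD.card * VD.card := Finset.card_product _ _
  refine ⟨s + 1, ht1, hta, ?_⟩
  rw [hb s]
  refine max_le hV ?_
  calc e (s + 1) / a s ≤ e (s + 1) / UD.card := Nat.div_le_div_left has hUpos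
    _ ≤ (UD.card * VD.card) / UD.card :=
        Nat.div_le_div_right ((he s).trans hEle)
    _ = VD.card := Nat.mul_div_cancel_left _ hUpos
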